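/- Let E be a real inner product space, let N ≥ 1, and let L_1, …, L_N : E → ℝ be differentiable functions with global loss L(ω) = (1/N) Σ_{i=1}^N L_i(ω). Assume the gradient of L is Lipschitz with constant L₁ ≥ 0 (L₁-smoothness). Fix ω_t ∈ E, a learning rate η > 0, and set ω_{t+1} = ω_t − η · (1/N) Σ_{i=1}^N ∇L_i(ω_t). Assume (i) δ-local dissimilarity at ω_t: (1/N) Σ_{i=1}^N ‖∇L_i(ω_t)‖² ≤ δ² ‖∇L(ω_t)‖², and (ii) the averaged gradient correlation bound (1/N) Σ_{i=1}^N ⟨∇L(ω_t), ∇L_i(ω_t)⟩ ≥ σ². Then L(ω_{t+1}) ≤ L(ω_t) + (L₁ η² / 2) δ² ‖∇L(ω_t)‖² − η σ². -/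

import Mathlib

open InnerProductSpace intervalIntegral

lemma descent_aux {E : Type*} [NormedAddCommGroup E] [InnerProductSpace ℝ E]
    [CompleteSpace E] {f : E → ℝ} (hf : Differentiable ℝ f)
    {L₁ : ℝ} (hL₁ : 0 ≤ L₁)
    (hlip : ∀ x y : E, ‖gradient f x - gradient f y‖ ≤ L₁ * ‖x - y‖)
    (x d : E) :
    f (x + d) ≤ f x + (inner ℝ (gradient f x) d : ℝ) + L₁ / 2 * ‖d‖ ^ 2 := by
  have hgc : Continuous (fun y => gradient f y) := by
    have : LipschitzWith (Real.toNNReal L₁) (fun y => gradient f y) := by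
      apply LipschitzWith.of_dist_le_mul
      intro a b
      simpa [dist_eq_norm, Real.coe_toNNReal _ hL₁] using hlip a b
    exact this.continuous
  set φ' : ℝ → ℝ := fun t => (inner ℝ (gradient f (x + t • d)) d : ℝ) with hφ'
  have hderiv : ∀ t : ℝ, HasDerivAt (fun t : ℝ => f (x + t • d)) (φ' t) t := by
    intro t
    have hc : HasDerivAt (fun t : ℝ => x + t • d) d t := by
      simpa using ((hasDerivAt_id t).smul_const d).const_add x
    have hg := (hf (x + t • d)).hasGradientAt
    have hfd := hasGradientAt_iff_hasFDerivAt.mp hg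
    have := hfd.comp_hasDerivAt t hc
    simpa [hφ', Function.comp_def] using this
  have hcont : Continuous φ' :=
    (hgc.comp (by continuity)).inner continuous_const
  have hFTC : ∫ t in (0:ℝ)..1, φ' t = f (x + d) - f x := by
    have := intervalIntegral.integral_eq_sub_of_hasDerivAt
      (f := fun t : ℝ => f (x + t • d)) (f' := φ')
      (fun t _ => hderiv t) (hcont.intervalIntegrable 0 1)
    simpa using this
  have hbound : ∫ t in (0:ℝ)..1, φ' t
      ≤ ∫ t in (0:ℝ)..1, ((inner ℝ (gradient f x) d : ℝ) + L₁ * t * ‖d‖ ^ 2) := by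
    apply intervalIntegral.integral_mono_on (by norm_num) (hcont.intervalIntegrable 0 1)
      ((by continuity : Continuous fun t : ℝ => (inner ℝ (gradient f x) d : ℝ) + L₁ * t * ‖d‖ ^ 2).intervalIntegrable 0 1)
    intro t ht
    rcases Set.mem_Icc.mp ht with ⟨ht0, ht1⟩
    have h1 : φ' t - (inner ℝ (gradient f x) d : ℝ)
        = (inner ℝ (gradient f (x + t • d) - gradient f x) d : ℝ) := by
      rw [inner_sub_left]
    have h2 : (inner ℝ (gradient f (x + t • d) - gradient f x) d : ℝ)
        ≤ L₁ * t * ‖d‖ ^ 2 := by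
      calc (inner ℝ (gradient f (x + t • d) - gradient f x) d : ℝ)
          ≤ ‖gradient f (x + t • d) - gradient f x‖ * ‖d‖ := real_inner_le_norm _ _
        _ ≤ (L₁ * ‖(x + t • d) - x‖) * ‖d‖ := by
            apply mul_le_mul_of_nonneg_right (hlip _ _) (norm_nonneg _)
        _ = L₁ * t * ‖d‖ ^ 2 := by
            simp [norm_smul, Real.norm_eq_abs, abs_of_nonneg ht0]; ring
    linarith
  have hint : ∫ t in (0:ℝ)..1, ((inner ℝ (gradient f x) d : ℝ) + L₁ * t * ‖d‖ ^ 2)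
      = (inner ℝ (gradient f x) d : ℝ) + L₁ / 2 * ‖d‖ ^ 2 := by
    have h1 : (fun t : ℝ => (inner ℝ (gradient f x) d : ℝ) + L₁ * t * ‖d‖ ^ 2)
        = fun t : ℝ => (inner ℝ (gradient f x) d : ℝ) + (L₁ * ‖d‖ ^ 2) * t := by
      funext t; ring
    rw [show (∫ t in (0:ℝ)..1, ((inner ℝ (gradient f x) d : ℝ) + L₁ * t * ‖d‖ ^ 2))
        = ∫ t in (0:ℝ)..1, ((inner ℝ (gradient f x) d : ℝ) + (L₁ * ‖d‖ ^ 2) * t) from by rw [h1],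
      intervalIntegral.integral_add intervalIntegrable_const
        ((by continuity : Continuous fun t : ℝ => (L₁ * ‖d‖ ^ 2) * t).intervalIntegrable 0 1),
      intervalIntegral.integral_const_mul, integral_id]
    simp; ring
  linarith [hFTC ▸ hbound, hint ▸ hbound]

/-- Lemma 1 (MP-FedCL): per-global-round descent bound before multi-prototype
aggregation. -/
theorem lemma1_descent
    {E : Type*} [NormedAddCommGroup E] [InnerProductSpace ℝ E] [CompleteSpace E]
    (N : ℕ) (hN : 1 ≤ N) (L : Fin N → E → ℝ)
    (hdiff : ∀ i, Differentiable ℝ (L i))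
    (Lg : E → ℝ) (hLg : Lg = fun ω => (1 / N : ℝ) * ∑ i, L i ω)
    (L₁ : ℝ) (hL₁ : 0 ≤ L₁)
    (hsmooth : ∀ x y : E, ‖gradient Lg x - gradient Lg y‖ ≤ L₁ * ‖x - y‖)
    (ωt : E) (η : ℝ) (hη : 0 < η)
    (ωt1 : E) (hupd : ωt1 = ωt - η • ((1 / N : ℝ) • ∑ i, gradient (L i) ωt))
    (δ σ : ℝ)
    (hdissim : (1 / N : ℝ) * ∑ i, ‖gradient (L i) ωt‖ ^ 2
        ≤ δ ^ 2 * ‖gradient Lg ωt‖ ^ 2)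
    (hcorr : σ ^ 2 ≤ (1 / N : ℝ) * ∑ i,
        (inner ℝ (gradient Lg ωt) (gradient (L i) ωt) : ℝ)) :
    Lg ωt1 ≤ Lg ωt + (L₁ * η ^ 2 / 2) * δ ^ 2 * ‖gradient Lg ωt‖ ^ 2 - η * σ ^ 2 := by
  have hNpos : (0:ℝ) < N := by exact_mod_cast Nat.lt_of_lt_of_le Nat.zero_lt_one hN
  set G : E := ∑ i, gradient (L i) ωt with hG
  set d : E := -(η • ((1 / N : ℝ) • G)) with hd
  have hωd : ωt1 = ωt + d := by rw [hupd, hd]; abel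
  have hLgdiff : Differentiable ℝ Lg := by
    rw [hLg]
    exact (Differentiable.fun_sum fun i _ => hdiff i).const_mul _
  have key := descent_aux hLgdiff hL₁ hsmooth ωt d
  rw [← hωd] at key
  -- inner product term
  have hinner : (inner ℝ (gradient Lg ωt) d : ℝ)
      = -(η * ((1 / N : ℝ) * ∑ i, (inner ℝ (gradient Lg ωt) (gradient (L i) ωt) : ℝ))) := by
    rw [hd, inner_neg_right, real_inner_smul_right, real_inner_smul_right, hG, inner_sum]
  have hinner_le : (inner ℝ (gradient Lg ωt) d : ℝ) ≤ -(η * σ ^ 2) := by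
    rw [hinner]
    have := mul_le_mul_of_nonneg_left hcorr hη.le
    linarith
  -- norm term
  have hdnorm : ‖d‖ ^ 2 = η ^ 2 * (1 / N : ℝ) ^ 2 * ‖G‖ ^ 2 := by
    rw [hd, norm_neg, norm_smul, norm_smul, Real.norm_eq_abs, Real.norm_eq_abs,
      abs_of_pos hη, abs_of_pos (by positivity : (0:ℝ) < 1 / N)]
    ring
  have hGsq : ‖G‖ ^ 2 ≤ (N : ℝ) * ∑ i, ‖gradient (L i) ωt‖ ^ 2 := by
    have h1 : ‖G‖ ≤ ∑ i, ‖gradient (L i) ωt‖ := norm_sum_le _ _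
    have h2 : (∑ i, ‖gradient (L i) ωt‖) ^ 2
        ≤ (N : ℝ) * ∑ i, ‖gradient (L i) ωt‖ ^ 2 := by
      have := sq_sum_le_card_mul_sum_sq
        (s := (Finset.univ : Finset (Fin N))) (f := fun i => ‖gradient (L i) ωt‖)
      simpa using this
    calc ‖G‖ ^ 2 ≤ (∑ i, ‖gradient (L i) ωt‖) ^ 2 :=
          pow_le_pow_left₀ (norm_nonneg _) h1 2
      _ ≤ _ := h2
  have hd_le : ‖d‖ ^ 2 ≤ η ^ 2 * (δ ^ 2 * ‖gradient Lg ωt‖ ^ 2) := by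
    rw [hdnorm]
    have hstep : η ^ 2 * (1 / N : ℝ) ^ 2 * ‖G‖ ^ 2
        ≤ η ^ 2 * ((1 / N : ℝ) * ∑ i, ‖gradient (L i) ωt‖ ^ 2) := by
      have h3 := mul_le_mul_of_nonneg_left hGsq
        (by positivity : (0:ℝ) ≤ η ^ 2 * (1 / N : ℝ) ^ 2)
      have hN' : (N:ℝ) ≠ 0 := ne_of_gt hNpos
      calc η ^ 2 * (1 / N : ℝ) ^ 2 * ‖G‖ ^ 2
          ≤ η ^ 2 * (1 / N : ℝ) ^ 2 * ((N : ℝ) * ∑ i, ‖gradient (L i) ωt‖ ^ 2) := h3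
        _ = η ^ 2 * ((1 / N : ℝ) * ∑ i, ‖gradient (L i) ωt‖ ^ 2) := by
            field_simp
    exact hstep.trans (mul_le_mul_of_nonneg_left hdissim (by positivity))
  have hquad : L₁ / 2 * ‖d‖ ^ 2 ≤ (L₁ * η ^ 2 / 2) * δ ^ 2 * ‖gradient Lg ωt‖ ^ 2 := by
    have := mul_le_mul_of_nonneg_left hd_le (by positivity : (0:ℝ) ≤ L₁ / 2)
    linarith
  linarith
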